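/- The canonical relation R^C is functional: if (X, ā, Y) ∈ R^C and (X, ā, Z) ∈ R^C, then Y = Z. -/

import Mathlib

/-- Terms: variables or constants. -/
inductive Tm (C : Type) : Type
  | var : ℕ → Tm C
  | const : C → Tm C
deriving DecidableEq

/-- Formulas of first-order coalition logic over a signature ⟨n, C, Ap⟩. -/
inductive Form (n : ℕ) (C : Type) (Ap : Type) : Type
  | atom : Ap → Form n C Ap
  | neg : Form n C Ap → Form n C Ap
  | and : Form n C Ap → Form n C Ap → Form n C Ap
  | box : (Fin n → Tm C) → Form n C Ap → Form n C Ap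
  | all : ℕ → Form n C Ap → Form n C Ap

namespace Form

variable {n : ℕ} {C Ap : Type}

def imp (φ ψ : Form n C Ap) : Form n C Ap := .neg (.and φ (.neg ψ))
def iff (φ ψ : Form n C Ap) : Form n C Ap := .and (imp φ ψ) (imp ψ φ)
def ex (x : ℕ) (φ : Form n C Ap) : Form n C Ap := .neg (.all x (.neg φ))

open Classical in
/-- Substitution of a term for a variable. -/
noncomputable def substT (t : Tm C) (x : ℕ) : Form n C Ap → Form n C Ap
  | .atom p => .atom p
  | .neg φ => .neg (substT t x φ)
  | .and φ ψ => .and (substT t x φ) (substT t x ψ)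
  | .box ts φ => .box (fun i => if ts i = .var x then t else ts i) (substT t x φ)
  | .all y φ => if y = x then .all y φ else .all y (substT t x φ)

/-- Substitution of a constant for a variable. -/
noncomputable def subst (a : C) (x : ℕ) (φ : Form n C Ap) : Form n C Ap := substT (.const a) x φ

/-- Free variables. -/
def FV : Form n C Ap → Finset ℕ
  | .atom _ => ∅
  | .neg φ => FV φ
  | .and φ ψ => FV φ ∪ FV ψ
  | .box ts φ => FV φ ∪ Finset.univ.biUnion (fun i => match ts i with | Tm.var x => {x} | _ => ∅)
  | .all y φ => FV φ \ {y}

/-- A sentence (closed formula). -/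
def closed (φ : Form n C Ap) : Prop := FV φ = ∅

/-- Universal closure of a formula. -/
def closure (φ : Form n C Ap) : Form n C Ap := ((FV φ).sort (· ≤ ·)).foldr Form.all φ

def size : Form n C Ap → ℕ
  | .atom _ => 1
  | .neg φ => size φ + 1
  | .and φ ψ => size φ + size ψ + 1
  | .box _ φ => size φ + 1
  | .all _ φ => size φ + 1

theorem size_substT (t : Tm C) (x : ℕ) (φ : Form n C Ap) :
    size (substT t x φ) = size φ := by
  induction φ with
  | atom p => rfl
  | neg φ ih => simp [substT, size, ih]
  | and φ ψ ih1 ih2 => simp [substT, size, ih1, ih2]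
  | box ts φ ih => simp [substT, size, ih]
  | all y φ ih => by_cases h : y = x <;> simp [substT, size, h, ih]

/-- Whether a term occurs in a formula. -/
def occursT (t : Tm C) : Form n C Ap → Prop
  | .atom _ => False
  | .neg φ => occursT t φ
  | .and φ ψ => occursT t φ ∨ occursT t ψ
  | .box ts φ => (∃ i, ts i = t) ∨ occursT t φ
  | .all y φ => (t = Tm.var y) ∨ occursT t φ

end Form

/-- A concurrent game structure over a signature ⟨n, C, Ap⟩ (actions = constants). -/
structure CGS (n : ℕ) (C : Type) (Ap : Type) where
  S : Type
  R : S → (Fin n → C) → S → Prop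
  V : Ap → S → Prop

namespace CGS

variable {n : ℕ} {C Ap : Type}

def Serial (G : CGS n C Ap) : Prop := ∀ s d, ∃ t, G.R s d t

def Functional (G : CGS n C Ap) : Prop := ∀ s d t v, G.R s d t → G.R s d v → t = v

end CGS

/-- Satisfaction of (closed) formulas in a CGS. -/
def Sat {n : ℕ} {C Ap : Type} (G : CGS n C Ap) : G.S → Form n C Ap → Prop
  | s, .atom p => G.V p s
  | s, .neg φ => ¬ Sat G s φ
  | s, .and φ ψ => Sat G s φ ∧ Sat G s ψ
  | s, .box ts φ => ∃ d : Fin n → C, (∀ i, ts i = Tm.const (d i)) ∧ ∃ t, G.R s d t ∧ Sat G t φ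
  | s, .all x φ => ∀ a : C, Sat G s (Form.subst a x φ)
termination_by _ φ => Form.size φ
decreasing_by all_goals simp [Form.subst, Form.size_substT, Form.size] <;> omega

/-- Truth of a possibly open formula: truth of its universal closure. -/
def SatC {n : ℕ} {C Ap : Type} (G : CGS n C Ap) (s : G.S) (φ : Form n C Ap) : Prop :=
  Sat G s (Form.closure φ)

/-- Validity in a CGS. -/
def ValidIn {n : ℕ} {C Ap : Type} (G : CGS n C Ap) (φ : Form n C Ap) : Prop :=
  ∀ s : G.S, SatC G s φ

/-- Propositional evaluation treating atoms, boxes and quantified formulas as atomic. -/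
def evalP {n : ℕ} {C Ap : Type} (v : Form n C Ap → Prop) : Form n C Ap → Prop
  | .neg φ => ¬ evalP v φ
  | .and φ ψ => evalP v φ ∧ evalP v ψ
  | .atom p => v (.atom p)
  | .box ts φ => v (.box ts φ)
  | .all x φ => v (.all x φ)

/-- Propositional tautologies. -/
def Taut {n : ℕ} {C Ap : Type} (φ : Form n C Ap) : Prop :=
  ∀ v : Form n C Ap → Prop, evalP v φ

/-- The axiom system of first-order coalition logic. -/
inductive Deriv {n : ℕ} {C Ap : Type} : Form n C Ap → Prop
  | PC {φ} : Taut φ → Deriv φ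
  | K (ts : Fin n → Tm C) (φ ψ) :
      Deriv (Form.iff (.and (.box ts φ) (.box ts ψ)) (.box ts (.and φ ψ)))
  | N (ts : Fin n → Tm C) (φ) :
      Deriv (Form.iff (.neg (.box ts φ)) (.box ts (.neg φ)))
  | E (x : ℕ) (t : Tm C) (φ) : Deriv (Form.imp (.all x φ) (Form.substT t x φ))
  | B (ts : Fin n → Tm C) (x : ℕ) (φ) (h : ∀ i, ts i ≠ Tm.var x) :
      Deriv (Form.imp (.all x (.box ts φ)) (.box ts (.all x φ)))
  | MP {φ ψ} : Deriv (Form.imp φ ψ) → Deriv φ → Deriv ψ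
  | Nec (ts : Fin n → Tm C) {φ} : Deriv φ → Deriv (.box ts φ)
  | Gen {φ ψ} (t : Tm C) (x : ℕ) :
      Deriv (Form.imp φ (Form.substT t x ψ)) → ¬ Form.occursT t φ →
      Deriv (Form.imp φ (.all x ψ))

/-- Derivability from a set of formulas. -/
def DerivFrom {n : ℕ} {C Ap : Type} (X : Set (Form n C Ap)) (φ : Form n C Ap) : Prop :=
  ∃ L : List (Form n C Ap), (∀ ψ ∈ L, ψ ∈ X) ∧ Deriv (L.foldr Form.imp φ)

def Consistent {n : ℕ} {C Ap : Type} (X : Set (Form n C Ap)) : Prop :=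
  ¬ ∃ φ, DerivFrom X φ ∧ DerivFrom X (.neg φ)

/-- A set of sentences. -/
def SentenceSet {n : ℕ} {C Ap : Type} (X : Set (Form n C Ap)) : Prop :=
  ∀ φ ∈ X, Form.closed φ

/-- Maximal consistent set (of sentences). -/
def MCS {n : ℕ} {C Ap : Type} (X : Set (Form n C Ap)) : Prop :=
  Consistent X ∧ ∀ ψ, Form.closed ψ → ψ ∉ X → ¬ Consistent (insert ψ X)

/-- The ∀-property. -/
def AllProp {n : ℕ} {C Ap : Type} (X : Set (Form n C Ap)) : Prop :=
  ∀ (φ : Form n C Ap) (x : ℕ), Form.FV φ ⊆ {x} →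
    ∃ a : C, Form.imp (Form.subst a x φ) (.all x φ) ∈ X

/-- The canonical model. -/
def canonical (n : ℕ) (C Ap : Type) : CGS n C Ap where
  S := {X : Set (Form n C Ap) // SentenceSet X ∧ MCS X ∧ AllProp X}
  R := fun X d Y => ∀ φ, φ ∈ Y.1 → Form.box (fun i => Tm.const (d i)) φ ∈ X.1
  V := fun p X => Form.atom p ∈ X.1

/-- Renaming of constants. -/
def Tm.mapC {C C' : Type} (f : C → C') : Tm C → Tm C'
  | .var x => .var x
  | .const c => .const (f c)

def Form.mapC {n : ℕ} {C C' Ap : Type} (f : C → C') : Form n C Ap → Form n C' Ap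
  | .atom p => .atom p
  | .neg φ => .neg (mapC f φ)
  | .and φ ψ => .and (mapC f φ) (mapC f ψ)
  | .box ts φ => .box (fun i => (ts i).mapC f) (mapC f φ)
  | .all y φ => .all y (mapC f φ)


section Toolkit

variable {n : ℕ} {C Ap : Type}

lemma taut_of {φ : Form n C Ap} (h : Taut φ) : Deriv φ := Deriv.PC h

lemma d_self (A : Form n C Ap) : Deriv (Form.imp A A) :=
  Deriv.PC (by intro v; simp only [Form.imp, evalP]; tauto)

lemma d_k {A B : Form n C Ap} (h : Deriv A) : Deriv (Form.imp B A) :=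
  Deriv.MP (Deriv.PC (by intro v; simp only [Form.imp, evalP]; tauto)) h

lemma d_trans {A B D : Form n C Ap} (h1 : Deriv (Form.imp A B))
    (h2 : Deriv (Form.imp B D)) : Deriv (Form.imp A D) :=
  Deriv.MP (Deriv.MP (Deriv.PC (by intro v; simp only [Form.imp, evalP]; tauto)) h1) h2

lemma d_lift {t A B : Form n C Ap} (h : Deriv (Form.imp A B)) :
    Deriv (Form.imp (Form.imp t A) (Form.imp t B)) :=
  Deriv.MP (Deriv.PC (by intro v; simp only [Form.imp, evalP]; tauto)) h

lemma d_lift2 {t A B D : Form n C Ap} (h : Deriv (Form.imp A (Form.imp B D))) :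
    Deriv (Form.imp (Form.imp t A) (Form.imp (Form.imp t B) (Form.imp t D))) :=
  Deriv.MP (Deriv.PC (by intro v; simp only [Form.imp, evalP]; tauto)) h

lemma d_swap {a t X : Form n C Ap} (h : Deriv (Form.imp a (Form.imp t X))) :
    Deriv (Form.imp t (Form.imp a X)) :=
  Deriv.MP (Deriv.PC (by intro v; simp only [Form.imp, evalP]; tauto)) h

/-- `B → (L ⊢ B)`, internalized. -/
lemma weak0_int (L : List (Form n C Ap)) (B : Form n C Ap) :
    Deriv (Form.imp B (L.foldr Form.imp B)) := by
  induction L with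
  | nil => exact d_self B
  | cons t T ih =>
      exact d_trans ih (Deriv.PC (by intro v; simp only [Form.imp, evalP, List.foldr_cons]; tauto))

lemma weak0 {L : List (Form n C Ap)} {B : Form n C Ap} (h : Deriv B) :
    Deriv (L.foldr Form.imp B) := Deriv.MP (weak0_int L B) h

/-- internal modus ponens under a list of hypotheses -/
lemma mp2_int (L : List (Form n C Ap)) (A B : Form n C Ap) :
    Deriv (Form.imp (L.foldr Form.imp (Form.imp A B))
      (Form.imp (L.foldr Form.imp A) (L.foldr Form.imp B))) := by
  induction L with
  | nil => exact d_self _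
  | cons t T ih => exact d_lift2 ih

lemma mp2 {L : List (Form n C Ap)} {A B : Form n C Ap}
    (h1 : Deriv (L.foldr Form.imp (Form.imp A B)))
    (h2 : Deriv (L.foldr Form.imp A)) : Deriv (L.foldr Form.imp B) :=
  Deriv.MP (Deriv.MP (mp2_int L A B) h1) h2

lemma d_hyp {L : List (Form n C Ap)} {a : Form n C Ap} (h : a ∈ L) :
    Deriv (L.foldr Form.imp a) := by
  induction L with
  | nil => simp at h
  | cons t T ih =>
      rcases List.mem_cons.1 h with h | h
      · subst h; exact weak0_int T a
      · exact d_k (ih h)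

/-- move the front hypothesis to the end, internalized -/
lemma drop_int (a : Form n C Ap) (L : List (Form n C Ap)) (χ : Form n C Ap) :
    Deriv (Form.imp (Form.imp a (L.foldr Form.imp χ))
      (L.foldr Form.imp (Form.imp a χ))) := by
  induction L generalizing χ with
  | nil => exact d_self _
  | cons t T ih =>
      have h1 : Deriv (Form.imp (Form.imp a (Form.imp t (T.foldr Form.imp χ)))
          (Form.imp t (Form.imp a (T.foldr Form.imp χ)))) :=
        Deriv.PC (by intro v; simp only [Form.imp, evalP]; tauto)
      exact d_trans h1 (d_lift (ih χ))

/-- weakening / subset lemma -/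
lemma d_weak {L L' : List (Form n C Ap)} {χ : Form n C Ap}
    (hsub : ∀ b ∈ L, b ∈ L') (h : Deriv (L.foldr Form.imp χ)) :
    Deriv (L'.foldr Form.imp χ) := by
  induction L generalizing χ with
  | nil => exact weak0 h
  | cons a T ih =>
      have h1 : Deriv (T.foldr Form.imp (Form.imp a χ)) :=
        Deriv.MP (drop_int a T χ) h
      have h2 : Deriv (L'.foldr Form.imp (Form.imp a χ)) :=
        ih (fun b hb => hsub b (List.mem_cons_of_mem _ hb)) h1
      exact mp2 h2 (d_hyp (hsub a List.mem_cons_self))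

lemma DerivFrom.mem {X : Set (Form n C Ap)} {φ : Form n C Ap} (h : φ ∈ X) :
    DerivFrom X φ := ⟨[φ], by simpa using h, d_self φ⟩

lemma DerivFrom.of_deriv {X : Set (Form n C Ap)} {φ : Form n C Ap} (h : Deriv φ) :
    DerivFrom X φ := ⟨[], by simp, h⟩

lemma DerivFrom.mp {X : Set (Form n C Ap)} {φ ψ : Form n C Ap}
    (h1 : DerivFrom X (Form.imp φ ψ)) (h2 : DerivFrom X φ) : DerivFrom X ψ := by
  obtain ⟨L1, hL1, hD1⟩ := h1
  obtain ⟨L2, hL2, hD2⟩ := h2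
  refine ⟨L1 ++ L2, ?_, ?_⟩
  · intro b hb; rcases List.mem_append.1 hb with h | h
    · exact hL1 b h
    · exact hL2 b h
  · exact mp2 (d_weak (fun b hb => List.mem_append_left _ hb) hD1)
      (d_weak (fun b hb => List.mem_append_right _ hb) hD2)

/-- Deduction theorem -/
lemma deduction {Z : Set (Form n C Ap)} {φ χ : Form n C Ap}
    (h : DerivFrom (insert φ Z) χ) : DerivFrom Z (Form.imp φ χ) := by
  classical
  obtain ⟨L, hL, hD⟩ := h
  refine ⟨L.filter (· ≠ φ), ?_, ?_⟩
  · intro b hb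
    have := List.mem_filter.1 hb
    rcases hL b this.1 with h | h
    · exact absurd h (by simpa using this.2)
    · exact h
  · have hs : ∀ b ∈ L, b ∈ L.filter (· ≠ φ) ++ [φ] := by
      intro b hb
      by_cases hbφ : b = φ
      · subst hbφ; simp
      · exact List.mem_append_left _ (List.mem_filter.2 ⟨hb, by simpa using hbφ⟩)
    have := d_weak hs hD
    rwa [List.foldr_append] at this

lemma neg_mem_of_not_mem {Z : Set (Form n C Ap)} (hZm : MCS Z)
    {φ : Form n C Ap} (hc : Form.closed φ) (h : φ ∉ Z) : Form.neg φ ∈ Z := by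
  by_contra hn
  have hcn : Form.closed (Form.neg φ) := hc
  have h1 : ¬ Consistent (insert φ Z) := hZm.2 φ hc h
  have h2 : ¬ Consistent (insert (Form.neg φ) Z) := hZm.2 _ hcn hn
  have key : ∀ ψ : Form n C Ap, ¬ Consistent (insert ψ Z) → DerivFrom Z (Form.neg ψ) := by
    intro ψ hinc
    rw [Consistent, not_not] at hinc
    obtain ⟨χ, hχ1, hχ2⟩ := hinc
    have d1 := deduction hχ1
    have d2 := deduction hχ2
    have tt : Deriv (Form.imp (Form.imp ψ χ)
        (Form.imp (Form.imp ψ (Form.neg χ)) (Form.neg ψ)) : Form n C Ap) :=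
      Deriv.PC (by intro v; simp only [Form.imp, evalP]; tauto)
    exact (DerivFrom.mp (DerivFrom.mp (DerivFrom.of_deriv tt) d1) d2)
  have dnφ := key φ h1
  have dnnφ := key (Form.neg φ) h2
  exact hZm.1 ⟨Form.neg φ, dnφ, dnnφ⟩

/-- one direction of the main theorem -/
lemma canonical_functional_sub {n : ℕ} {C Ap : Type}
    (X Y Z : Set (Form n C Ap))
    (hXm : MCS X) (hYs : SentenceSet Y)
    (d : Fin n → C)
    (hXY : ∀ φ, φ ∈ Y → Form.box (fun i => Tm.const (d i)) φ ∈ X)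
    (hXZ : ∀ φ, φ ∈ Z → Form.box (fun i => Tm.const (d i)) φ ∈ X)
    (hZm : MCS Z) : Y ⊆ Z := by
  intro φ hφY
  by_contra hφZ
  have hc : Form.closed φ := hYs φ hφY
  have hnZ : Form.neg φ ∈ Z := neg_mem_of_not_mem hZm hc hφZ
  set ts : Fin n → Tm C := fun i => Tm.const (d i)
  have hb1 : Form.box ts φ ∈ X := hXY φ hφY
  have hb2 : Form.box ts (Form.neg φ) ∈ X := hXZ _ hnZ
  have hN : Deriv (Form.iff (Form.neg (Form.box ts φ)) (Form.box ts (Form.neg φ))) :=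
    Deriv.N ts φ
  have himp : Deriv (Form.imp (Form.box ts (Form.neg φ)) (Form.neg (Form.box ts φ))) := by
    have tt : Deriv (Form.imp
        (Form.iff (Form.neg (Form.box ts φ)) (Form.box ts (Form.neg φ)))
        (Form.imp (Form.box ts (Form.neg φ)) (Form.neg (Form.box ts φ)))) :=
      Deriv.PC (by intro v; simp only [Form.imp, Form.iff, evalP]; tauto)
    exact Deriv.MP tt hN
  have dX1 : DerivFrom X (Form.box ts φ) := DerivFrom.mem hb1
  have dX2 : DerivFrom X (Form.neg (Form.box ts φ)) :=
    DerivFrom.mp (DerivFrom.of_deriv himp) (DerivFrom.mem hb2)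
  exact hXm.1 ⟨Form.box ts φ, dX1, dX2⟩

end Toolkit

/-- the canonical relation is functional. -/
theorem canonical_functional {n : ℕ} {C Ap : Type}
    (X Y Z : Set (Form n C Ap))
    (hXs : SentenceSet X) (hXm : MCS X) (hXa : AllProp X)
    (hYs : SentenceSet Y) (hYm : MCS Y) (hYa : AllProp Y)
    (hZs : SentenceSet Z) (hZm : MCS Z) (hZa : AllProp Z)
    (d : Fin n → C)
    (hXY : ∀ φ, φ ∈ Y → Form.box (fun i => Tm.const (d i)) φ ∈ X)
    (hXZ : ∀ φ, φ ∈ Z → Form.box (fun i => Tm.const (d i)) φ ∈ X) :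
    Y = Z :=
  Set.Subset.antisymm
    (canonical_functional_sub X Y Z hXm hYs d hXY hXZ hZm)
    (canonical_functional_sub X Z Y hXm hZs d hXZ hXY hYm)
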